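/- arXiv:1412.0738 — 2 statements merged into one kernel-verified Lean document; each statement's English description precedes it below -/
import Mathlib

section
/- The three-dimensional Hénon map H(x, y, z) = (y, z, M1 + B·x + M2·y − z²) has a fixed point at which the Jacobian matrix of H has characteristic polynomial (λ + 1)²·(λ − 1) (i.e., the triplet of multipliers is (−1, −1, +1)) if and only if (M1, M2, B) = (−1/4, 1, 1); in that case the fixed point is (1/2, 1/2, 1/2). -/
open Polynomial

lemma cp_aux (B M2 z : ℝ) :
    Matrix.charpoly (!![0, 1, 0; 0, 0, 1; B, M2, -2 * z] : Matrix (Fin 3) (Fin 3) ℝ) =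
      X ^ 3 + C (2 * z) * X ^ 2 - C M2 * X - C B := by
  rw [Matrix.charpoly, Matrix.det_fin_three]
  simp [Matrix.charmatrix_apply_eq, Matrix.charmatrix_apply_ne]
  ring

/-- The 3D Hénon map has a fixed point with multipliers `(−1,−1,+1)` (i.e. characteristic
polynomial `(λ+1)²(λ−1)` of the Jacobian there) iff `(M1, M2, B) = (−1/4, 1, 1)`;
in that case the fixed point is `(1/2, 1/2, 1/2)`. -/
theorem henon_multipliers_minus_one_minus_one_one (M1 M2 B : ℝ)
    (H : ℝ × ℝ × ℝ → ℝ × ℝ × ℝ)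
    (hH : ∀ x y z : ℝ, H (x, y, z) = (y, z, M1 + B * x + M2 * y - z ^ 2)) :
    ((∃ p : ℝ × ℝ × ℝ, H p = p ∧
        Matrix.charpoly (!![0, 1, 0; 0, 0, 1; B, M2, -2 * p.2.2] : Matrix (Fin 3) (Fin 3) ℝ) =
          (X + 1) ^ 2 * (X - 1)) ↔ (M1 = -(1/4) ∧ M2 = 1 ∧ B = 1)) ∧
    ((M1 = -(1/4) ∧ M2 = 1 ∧ B = 1) →
      ∀ p : ℝ × ℝ × ℝ, H p = p ∧
        Matrix.charpoly (!![0, 1, 0; 0, 0, 1; B, M2, -2 * p.2.2] : Matrix (Fin 3) (Fin 3) ℝ) =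
          (X + 1) ^ 2 * (X - 1) → p = (1/2, 1/2, 1/2)) := by
  constructor
  · constructor
    · rintro ⟨⟨x, y, z⟩, hfix, hcp⟩
      rw [hH] at hfix
      obtain ⟨h1, h2, h3⟩ : y = x ∧ z = y ∧ M1 + B * x + M2 * y - z ^ 2 = z := by
        simpa [Prod.ext_iff] using hfix
      rw [cp_aux] at hcp
      have e0 := congrArg (eval (0 : ℝ)) hcp
      have e1 := congrArg (eval (1 : ℝ)) hcp
      have e2 := congrArg (eval (-1 : ℝ)) hcp
      simp only [eval_add, eval_sub, eval_mul, eval_pow, eval_X, eval_C, eval_one] at e0 e1 e2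
      norm_num at e0 e1 e2
      have hz : z = 1/2 := by linarith
      have hM2 : M2 = 1 := by linarith
      subst h1 h2 hz hM2 e0
      refine ⟨by nlinarith [h3], rfl, rfl⟩
    · rintro ⟨hM1, hM2, hB⟩
      refine ⟨(1/2, 1/2, 1/2), ?_, ?_⟩
      · rw [hH, hM1, hM2, hB]; norm_num
      · rw [cp_aux, hM2, hB]
        norm_num
        ring
  · rintro ⟨hM1, hM2, hB⟩ ⟨x, y, z⟩ ⟨hfix, hcp⟩
    rw [hH] at hfix
    obtain ⟨h1, h2, h3⟩ : y = x ∧ z = y ∧ M1 + B * x + M2 * y - z ^ 2 = z := by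
      simpa [Prod.ext_iff] using hfix
    rw [cp_aux] at hcp
    have e1 := congrArg (eval (1 : ℝ)) hcp
    have e2 := congrArg (eval (-1 : ℝ)) hcp
    simp only [eval_add, eval_sub, eval_mul, eval_pow, eval_X, eval_C, eval_one] at e1 e2
    norm_num at e1 e2
    have hz : z = 1/2 := by linarith
    subst h1 h2 hz
    rfl
end

section
/- Let B ≠ 0 and let H(x, y, z) = (y, z, M1 + B·x + M2·y − z²) be the three-dimensional Hénon map. Define Ĥ(x, y, z) = (y, z, M̂1 + M̂2·z + B̂·x − y²) with B̂ = 1/B, M̂1 = M1/B², M̂2 = −M2/B. Let σ(x, y, z) = (z, y, x) and h(v) = (−1/B)·v for v ∈ ℝ³. Then Ĥ = h ∘ σ ∘ H⁻¹ ∘ σ ∘ h⁻¹, i.e., Ĥ is conjugate, via the affine bijection σ ∘ h⁻¹ = h⁻¹ ∘ σ, to the inverse of H. -/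
/-- The map (HM2) with `B̂ = 1/B`, `M̂1 = M1/B²`, `M̂2 = −M2/B` is conjugate, via the affine
bijection `σ ∘ h⁻¹ = h⁻¹ ∘ σ` (with `σ(x,y,z) = (z,y,x)` and `h(v) = (−1/B)·v`), to the
inverse of the 3D Hénon map (HM1). -/
theorem HM2_conjugate_inverse_HM1 (M1 M2 B : ℝ) (hB : B ≠ 0)
    (H Hhat σ h hinv : ℝ × ℝ × ℝ → ℝ × ℝ × ℝ)
    (hH : ∀ x y z : ℝ, H (x, y, z) = (y, z, M1 + B * x + M2 * y - z ^ 2))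
    (hHhat : ∀ x y z : ℝ,
      Hhat (x, y, z) = (y, z, M1 / B ^ 2 + (-(M2 / B)) * z + (1 / B) * x - y ^ 2))
    (hσ : ∀ x y z : ℝ, σ (x, y, z) = (z, y, x))
    (hh : ∀ v : ℝ × ℝ × ℝ, h v = (-(1 / B)) • v)
    (hhinv : ∀ v : ℝ × ℝ × ℝ, hinv v = (-B) • v) :
    (σ ∘ hinv = hinv ∘ σ) ∧
      Hhat = h ∘ σ ∘ Function.invFun H ∘ σ ∘ hinv := by
  set G : ℝ × ℝ × ℝ → ℝ × ℝ × ℝ :=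
    fun p => ((p.2.2 - M1 - M2 * p.1 + p.2.1 ^ 2) / B, p.1, p.2.1) with hG
  have hHG : ∀ p, H (G p) = p := by
    rintro ⟨a, b, c⟩
    simp only [hG, hH]
    refine Prod.ext rfl (Prod.ext rfl ?_)
    field_simp
    ring
  have hGH : ∀ p, G (H p) = p := by
    rintro ⟨a, b, c⟩
    simp only [hG, hH]
    refine Prod.ext ?_ rfl
    field_simp
    ring
  have hinj : Function.Injective H := Function.LeftInverse.injective hGH
  have hinvH : ∀ p, Function.invFun H p = G p := by
    intro p
    calc Function.invFun H p = Function.invFun H (H (G p)) := by rw [hHG]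
      _ = G p := Function.leftInverse_invFun hinj _
  constructor
  · funext p
    obtain ⟨x, y, z⟩ := p
    simp [Function.comp, hhinv, hσ, Prod.smul_mk, smul_eq_mul]
  · funext p
    obtain ⟨x, y, z⟩ := p
    simp only [Function.comp, hhinv, Prod.smul_mk, smul_eq_mul, hσ, hinvH, hG, hh, hHhat]
    refine Prod.ext ?_ (Prod.ext ?_ ?_) <;> (simp; try field_simp; try ring)
end
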